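/- Let S_1, …, S_n be a row isometry on a complex Hilbert space H, let N ⊆ H be a closed subspace that is coinvariant for each S_j, and let P be the orthogonal projection onto N. Assume the compressions U_j = P S_j|_N form a spherical unitary on N (pairwise commuting normal operators with ∑_{j=1}^n U_j U_j* = I_N). Then ∑_{j=1}^n (I − P) S_j P S_j* P = 0. (In block notation S_j = [[U_j, 0], [D_j, E_j]] with respect to H = N ⊕ N^⊥, this says ∑_{j=1}^n D_j U_j* = 0.) -/

import Mathlib

local notation "⟪" x ", " y "⟫_ℂ" => (inner ℂ x y : ℂ)


open ContinuousLinearMap in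
/-- From the proof of Lemma 3.3 of Davidson–Le: if `S` is a row isometry, `N` a coinvariant
closed subspace whose compressions `Uⱼ = P Sⱼ|_N` form a spherical unitary, then, writing
`Sⱼ = [[Uⱼ, 0], [Dⱼ, Eⱼ]]` with respect to `H = N ⊕ N^⊥`, one has `∑ Dⱼ Uⱼ* = 0`; i.e.
`∑ (I − P) Sⱼ P Sⱼ* P = 0`. -/
theorem row_isometric_dilation_of_spherical_unitary_DUstar
    {H : Type*} [NormedAddCommGroup H] [InnerProductSpace ℂ H] [CompleteSpace H]
    {n : ℕ} (S : Fin n → H →L[ℂ] H)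
    (hrow : ∀ i j, star (S i) * S j = if i = j then 1 else 0)
    (N : Submodule ℂ H) [CompleteSpace N]
    (hcoinv : ∀ j, ∀ x ∈ N, adjoint (S j) x ∈ N)
    -- the compressions `Uⱼ = P_N Sⱼ|_N` :
    (U : Fin n → N →L[ℂ] N)
    (hU : ∀ j, U j = N.orthogonalProjectionOnto ∘L (S j) ∘L N.subtypeL)
    -- `U` is a spherical unitary :
    (hUcomm : ∀ i j, U i * U j = U j * U i)
    (hUnormal : ∀ i, U i * star (U i) = star (U i) * U i)
    (hUsum : ∑ j, U j * star (U j) = 1) :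
    ∑ j, ((1 - N.subtypeL ∘L N.orthogonalProjectionOnto) ∘L S j
            ∘L (N.subtypeL ∘L N.orthogonalProjectionOnto) ∘L star (S j)
            ∘L (N.subtypeL ∘L N.orthogonalProjectionOnto)) = 0 := by
  ext x
  set w : N := N.orthogonalProjectionOnto x with hw
  set z : Fin n → N := fun j => star (U j) w with hzdef
  -- star (U j) = P ∘ (S j)† ∘ ι
  have hUstar : ∀ j, (star (U j) : N →L[ℂ] N)
      = N.orthogonalProjectionOnto ∘L adjoint (S j) ∘L N.subtypeL := by
    intro j
    rw [ContinuousLinearMap.star_eq_adjoint, hU j, ContinuousLinearMap.adjoint_comp,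
      ContinuousLinearMap.adjoint_comp, Submodule.adjoint_subtypeL,
      Submodule.adjoint_orthogonalProjectionOnto, ContinuousLinearMap.comp_assoc]
  have hzc : ∀ j, (z j : H) = adjoint (S j) (w : H) := by
    intro j
    have hmem : adjoint (S j) (w : H) ∈ N := hcoinv j _ w.2
    simp only [hzdef, hUstar]
    simp only [ContinuousLinearMap.comp_apply, Submodule.subtypeL_apply]
    exact (N.starProjection_eq_self_iff.mpr hmem)
  -- row isometry on inner products
  have hiso : ∀ (i j : Fin n) (a b : H),
      ⟪S i a, S j b⟫_ℂ = if i = j then ⟪a, b⟫_ℂ else 0 := by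
    intro i j a b
    have h := congrArg (fun T : H →L[ℂ] H => ⟪a, T b⟫_ℂ) (hrow i j)
    simp only [ContinuousLinearMap.mul_apply, ContinuousLinearMap.star_eq_adjoint,
      ContinuousLinearMap.adjoint_inner_right] at h
    rw [h]
    split <;> simp
  set v : H := ∑ j, S j (z j : H) with hv
  have hsumz : ∀ c : N, ⟪v, (c : H)⟫_ℂ = ∑ j, ⟪(z j : H), adjoint (S j) (c : H)⟫_ℂ := by
    intro c
    rw [hv, sum_inner]
    refine Finset.sum_congr rfl fun j _ => ?_
    rw [ContinuousLinearMap.adjoint_inner_right]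
  have hvv : ⟪v, v⟫_ℂ = ∑ j, ⟪(z j : H), (z j : H)⟫_ℂ := by
    rw [hv, sum_inner]
    simp only [inner_sum, hiso]
    simp
  have hvw : ⟪v, (w : H)⟫_ℂ = ∑ j, ⟪(z j : H), (z j : H)⟫_ℂ := by
    rw [hsumz w]
    exact Finset.sum_congr rfl fun j _ => by rw [← hzc j]
  have hww : ⟪(w : H), (w : H)⟫_ℂ = ∑ j, ⟪(z j : H), (z j : H)⟫_ℂ := by
    have hw' : (∑ j, U j (z j)) = w := by
      have := congrArg (fun T : N →L[ℂ] N => T w) hUsum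
      simpa [ContinuousLinearMap.sum_apply] using this
    calc ⟪(w : H), (w : H)⟫_ℂ = ⟪w, w⟫_ℂ := (Submodule.coe_inner N w w).symm
      _ = ⟪∑ j, U j (z j), w⟫_ℂ := by rw [hw']
      _ = ∑ j, ⟪U j (z j), w⟫_ℂ := by rw [sum_inner]
      _ = ∑ j, ⟪(z j : H), (z j : H)⟫_ℂ := by
          refine Finset.sum_congr rfl fun j _ => ?_
          rw [← ContinuousLinearMap.adjoint_inner_right, ← ContinuousLinearMap.star_eq_adjoint]
          exact Submodule.coe_inner N (z j) (z j)
  have hwv : ⟪(w : H), v⟫_ℂ = ∑ j, ⟪(z j : H), (z j : H)⟫_ℂ := by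
    rw [← inner_conj_symm, hvw, map_sum]
    exact Finset.sum_congr rfl fun j _ => inner_self_conj ((z j : H))
  have hveq : v = (w : H) := sub_eq_zero.mp (by
    have h0 : ⟪v - (w : H), v - (w : H)⟫_ℂ = 0 := by
      rw [inner_sub_sub_self, hvv, hvw, hwv, hww]; ring
    exact inner_self_eq_zero.mp h0)
  -- now compute the LHS applied to x
  have hQx : (N.subtypeL ∘L N.orthogonalProjectionOnto) x = (w : H) := rfl
  simp only [ContinuousLinearMap.sum_apply, ContinuousLinearMap.comp_apply,
    Submodule.subtypeL_apply, ContinuousLinearMap.zero_apply]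
  have hterm : ∀ j, (N.orthogonalProjectionOnto
      ((star (S j)) ((N.orthogonalProjectionOnto x : H))) : H) = (z j : H) := by
    intro j
    rw [hzc j, ContinuousLinearMap.star_eq_adjoint]
    exact N.starProjection_eq_self_iff.mpr (hcoinv j _ w.2)
  calc ∑ j, (1 - N.subtypeL ∘L N.orthogonalProjectionOnto)
        (S j ((N.orthogonalProjectionOnto ((star (S j)) ((N.orthogonalProjectionOnto x : H))) : H)))
      = ∑ j, (1 - N.subtypeL ∘L N.orthogonalProjectionOnto) (S j (z j : H)) := by
        refine Finset.sum_congr rfl fun j _ => by rw [hterm j]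
    _ = (1 - N.subtypeL ∘L N.orthogonalProjectionOnto) v := by rw [hv, map_sum]
    _ = 0 := by
        rw [hveq]
        simp only [ContinuousLinearMap.sub_apply, ContinuousLinearMap.one_apply,
          ContinuousLinearMap.comp_apply, Submodule.subtypeL_apply,
          Submodule.orthogonalProjectionOnto_mem_subspace_eq_self, sub_self]
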